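/- Let 0 < a < 1 and set M = (ln(1/a)/(1 + ln(1/a)))². Then for every α ∈ (0,1) and every λ ∈ (0,a], one has (1 − λ^{√α})² ≥ M·α; consequently g_α(λ) ≤ 1/(λ + M·α) for all λ ∈ (0,a] and α ∈ (0,1). -/

import Mathlib

/-- For `α > 0` and `λ ∈ (0,1)`, the generator function
`g_α(λ) = 1/(λ + (1 − λ^{√α})²)` where `λ^{√α} = exp(√α · log λ)`. -/
noncomputable def genFun (α lam : ℝ) : ℝ :=
  1 / (lam + (1 - Real.exp (Real.sqrt α * Real.log lam)) ^ 2)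

/-- Let `0 < a < 1` and set `M = (log(1/a)/(1 + log(1/a)))²`. Then for every `α ∈ (0,1)`
and every `λ ∈ (0,a]`, one has `(1 − λ^{√α})² ≥ M·α`; consequently
`g_α(λ) ≤ 1/(λ + M·α)`. -/
theorem stmt1 (a : ℝ) (ha0 : 0 < a) (ha1 : a < 1)
    (M : ℝ) (hM : M = (Real.log (1 / a) / (1 + Real.log (1 / a))) ^ 2) :
    ∀ α ∈ Set.Ioo (0 : ℝ) 1, ∀ lam ∈ Set.Ioc (0 : ℝ) a,
      (1 - Real.exp (Real.sqrt α * Real.log lam)) ^ 2 ≥ M * α ∧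
      genFun α lam ≤ 1 / (lam + M * α) := by
  intro α hα lam hlam
  obtain ⟨hα0, hα1⟩ := hα
  obtain ⟨hl0, hla⟩ := hlam
  set L := Real.log (1 / a) with hL
  have hLa : L = -Real.log a := by rw [hL, one_div, Real.log_inv]
  have hL0 : 0 < L := by
    rw [hLa]; simpa using Real.log_neg ha0 ha1
  set t := Real.sqrt α with ht
  have ht0 : 0 < t := Real.sqrt_pos.mpr hα0
  have ht2 : t ^ 2 = α := Real.sq_sqrt hα0.le
  have ht1 : t ≤ 1 := by nlinarith
  have hloglam : Real.log lam ≤ -L := by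
    rw [hLa, neg_neg]
    exact Real.log_le_log hl0 hla
  have hexp : Real.exp (t * Real.log lam) ≤ Real.exp (-(t * L)) := by
    apply Real.exp_le_exp.mpr
    nlinarith [mul_le_mul_of_nonneg_left hloglam ht0.le]
  have hpos : (0:ℝ) < 1 + t * L := by positivity
  have hkey : Real.exp (-(t * L)) ≤ 1 / (1 + t * L) := by
    rw [Real.exp_neg, inv_eq_one_div]
    apply one_div_le_one_div_of_le hpos
    linarith [Real.add_one_le_exp (t * L)]
  have h3 : t * L / (1 + L) ≤ t * L / (1 + t * L) := by
    apply div_le_div_of_nonneg_left (by positivity) hpos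
    nlinarith
  have h2 : 1 - Real.exp (t * Real.log lam) ≥ t * L / (1 + L) := by
    have heq : 1 - 1 / (1 + t * L) = t * L / (1 + t * L) := by field_simp; ring
    have := hexp.trans hkey
    linarith
  have hMα : M * α = (t * L / (1 + L)) ^ 2 := by
    rw [hM, ← ht2]
    field_simp
  have hnn : (0:ℝ) ≤ t * L / (1 + L) := by positivity
  have hsq : (1 - Real.exp (t * Real.log lam)) ^ 2 ≥ M * α := by
    rw [hMα]
    apply pow_le_pow_left₀ hnn h2
  refine ⟨hsq, ?_⟩
  unfold genFun
  rw [← ht]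
  apply one_div_le_one_div_of_le
  · have : 0 ≤ M := by rw [hM]; positivity
    nlinarith
  · linarith
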